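/- Let R be a finite commutative chain ring with maximal ideal ⟨γ⟩, nilpotency index s, and residue field of size q. Let C ⊆ R^n be a nonzero linear code with minimum homogeneous distance d = d_Hom(C). Then d ≤ (|C|/(|C|−1))·n. Moreover, equality d = (|C|/(|C|−1))·n holds if and only if C is non-degenerate (for every coordinate i there is c ∈ C with c_i ≠ 0) and every nonzero codeword of C has homogeneous weight exactly d. -/

import Mathlib

open scoped BigOperators Classical

/-- The normalized homogeneous weight on a finite chain ring with maximal ideal `⟨γ⟩`,
nilpotency index `s` and residue field of size `q`. -/
noncomputable def wtHom {R : Type*} [CommRing R] (γ : R) (s q : ℕ) (x : R) : ℚ :=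
  if x = 0 then 0
  else if x ∈ Ideal.span {γ ^ (s - 1)} then (q : ℚ) / ((q : ℚ) - 1)
  else 1

/-- Homogeneous weight of a vector: the sum of the weights of its coordinates. -/
noncomputable def wtHomV {R : Type*} [CommRing R] (γ : R) (s q : ℕ) {n : ℕ}
    (v : Fin n → R) : ℚ :=
  ∑ i, wtHom γ s q (v i)

/-- Hamming weight of a vector: the number of nonzero coordinates. -/
noncomputable def hWt {R : Type*} [Zero R] {n : ℕ} (v : Fin n → R) : ℕ :=
  Nat.card {i : Fin n // v i ≠ 0}

/-- `K` is the rank of the code `C`: the least cardinality of a generating set of `C`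
as an `R`-module. -/
def IsCodeRank {R : Type*} [CommRing R] {n : ℕ} (C : Submodule R (Fin n → R)) (K : ℕ) : Prop :=
  IsLeast {k : ℕ | ∃ S : Finset (Fin n → R),
    S.card = k ∧ Submodule.span R (S : Set (Fin n → R)) = C} K

/-- The socle of a code: the codewords all of whose coordinates lie in `⟨γ^(s-1)⟩`. -/
def socleCode {R : Type*} [CommRing R] (γ : R) (s : ℕ) {n : ℕ}
    (C : Submodule R (Fin n → R)) : Submodule R (Fin n → R) :=
  C ⊓ Submodule.pi Set.univ (fun _ : Fin n => Ideal.span {γ ^ (s - 1)})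

lemma card_eq_ker_mul_range' {R M N : Type*} [CommRing R] [AddCommGroup M] [AddCommGroup N]
    [Module R M] [Module R N] (ψ : M →ₗ[R] N) :
    Nat.card M = Nat.card (LinearMap.ker ψ) * Nat.card (LinearMap.range ψ) := by
  rw [Submodule.card_eq_card_quotient_mul_card (LinearMap.ker ψ),
    Nat.card_congr ψ.quotKerEquivRange.toEquiv]

lemma unit_pow_decomp {R : Type*} [CommRing R] [IsLocalRing R] (γ : R) (s : ℕ) (hs : 1 ≤ s)
    (hmax : IsLocalRing.maximalIdeal R = Ideal.span {γ})
    (hnil : γ ^ s = 0) {x : R} (hx : x ≠ 0) :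
    γ ^ (s - 1) ∈ Ideal.span {x} := by
  set P : ℕ → Prop := fun t => x ∈ Ideal.span {γ ^ t} with hP
  have hP0 : P 0 := by simp [hP, Ideal.span_singleton_one]
  set t := Nat.findGreatest P s with ht
  have hPt : P t := Nat.findGreatest_spec (Nat.zero_le s) hP0
  have hts : t ≤ s := Nat.findGreatest_le s
  have htlt : t < s := by
    rcases lt_or_eq_of_le hts with h | h
    · exact h
    · exfalso
      rw [h] at hPt
      simp only [hP, hnil, Ideal.span_singleton_eq_bot.mpr rfl, Ideal.mem_bot] at hPt
      exact hx hPt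
  obtain ⟨a, ha⟩ := Ideal.mem_span_singleton.mp hPt
  have haunit : IsUnit a := by
    by_contra hau
    have : a ∈ IsLocalRing.maximalIdeal R := hau
    rw [hmax, Ideal.mem_span_singleton] at this
    obtain ⟨b, hb⟩ := this
    have : P (t + 1) := by
      rw [hP]
      exact Ideal.mem_span_singleton.mpr ⟨b, by rw [ha, hb, pow_succ]; ring⟩
    have := Nat.le_findGreatest htlt this
    omega
  obtain ⟨u, hu⟩ := haunit
  rw [Ideal.mem_span_singleton]
  refine ⟨γ ^ (s - 1 - t) * (u⁻¹ : Rˣ), ?_⟩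
  have : (x : R) * (γ ^ (s-1-t) * (u⁻¹ : Rˣ)) = γ ^ t * γ ^ (s-1-t) * ((u : R) * (u⁻¹ : Rˣ)) := by
    rw [ha, ← hu]; ring
  rw [this, ← pow_add, Units.mul_inv, mul_one]
  congr 1
  omega

lemma card_minimal_ideal {R : Type*} [CommRing R] [IsLocalRing R] [Fintype R] (γ : R) (s : ℕ)
    (hs : 1 ≤ s) (hmax : IsLocalRing.maximalIdeal R = Ideal.span {γ})
    (hnil : γ ^ s = 0) (hnil' : γ ^ (s - 1) ≠ 0) :
    Nat.card (Ideal.span {γ ^ (s-1)} : Ideal R) = Nat.card (R ⧸ IsLocalRing.maximalIdeal R) := by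
  set f := LinearMap.toSpanSingleton R R (γ ^ (s-1)) with hf
  have hker : LinearMap.ker f = IsLocalRing.maximalIdeal R := by
    ext r
    simp only [LinearMap.mem_ker, hf, LinearMap.toSpanSingleton_apply, smul_eq_mul]
    constructor
    · intro h
      by_contra hr
      have hu : IsUnit r := by
        exact IsLocalRing.notMem_maximalIdeal.mp hr
      obtain ⟨u, hu⟩ := hu
      apply hnil'
      have : (u⁻¹ : Rˣ) * (r * γ ^ (s-1)) = γ ^ (s-1) := by
        rw [← hu, ← mul_assoc, Units.inv_mul, one_mul]
      rw [← this, h, mul_zero]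
    · intro h
      rw [hmax, Ideal.mem_span_singleton] at h
      obtain ⟨c, hc⟩ := h
      rw [hc]
      have h2 : γ * c * γ ^ (s-1) = c * γ ^ s := by
        have h3 : s - 1 + 1 = s := by omega
        rw [mul_comm γ c, mul_assoc, ← pow_succ', h3]
      rw [h2, hnil, mul_zero]
  have hrange : LinearMap.range f = (Ideal.span {γ ^ (s-1)} : Ideal R) := by
    rw [hf, ← LinearMap.span_singleton_eq_range]
  rw [← hrange, ← Nat.card_congr f.quotKerEquivRange.toEquiv, hker]

lemma two_le_q {R : Type*} [CommRing R] [IsLocalRing R] [Fintype R] {q : ℕ}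
    (hq : Nat.card (R ⧸ IsLocalRing.maximalIdeal R) = q) : 2 ≤ q := by
  rw [← hq]
  have h1 : Nontrivial (R ⧸ IsLocalRing.maximalIdeal R) :=
    Ideal.Quotient.nontrivial_iff.mpr (Ideal.IsMaximal.ne_top inferInstance)
  have h2 : Finite (R ⧸ IsLocalRing.maximalIdeal R) := Quotient.finite _
  haveI : Fintype (R ⧸ IsLocalRing.maximalIdeal R) := Fintype.ofFinite _
  rw [Nat.card_eq_fintype_card]
  exact Fintype.one_lt_card_iff_nontrivial.mpr h1

set_option maxHeartbeats 1000000
set_option synthInstance.maxHeartbeats 400000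

lemma coord_sum {R : Type*} [CommRing R] [IsLocalRing R] [Fintype R] (γ : R) (s q : ℕ)
    (hs : 1 ≤ s) (hmax : IsLocalRing.maximalIdeal R = Ideal.span {γ})
    (hnil : γ ^ s = 0) (hnil' : γ ^ (s - 1) ≠ 0)
    (hq : Nat.card (R ⧸ IsLocalRing.maximalIdeal R) = q)
    {n : ℕ} (C : Submodule R (Fin n → R)) (i : Fin n) (h : ∃ c ∈ C, c i ≠ 0) :
    ∑ c : C, wtHom γ s q ((c : Fin n → R) i) = (Nat.card C : ℚ) := by
  have hq2 : 2 ≤ q := two_le_q hq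
  have hq1 : ((q : ℚ) - 1) ≠ 0 := by
    have : (2 : ℚ) ≤ (q : ℚ) := by exact_mod_cast hq2
    linarith
  set J : Ideal R := Ideal.span {γ ^ (s - 1)} with hJ
  have hwt : ∀ x : R, wtHom γ s q x =
      1 - (if x = 0 then (1:ℚ) else 0) +
        (if x ∈ J ∧ x ≠ 0 then (1:ℚ) else 0) / ((q:ℚ) - 1) := by
    intro x
    unfold wtHom
    by_cases h0 : x = 0
    · simp [h0]
    · by_cases hx : x ∈ J
      · have hx' : x ∈ Ideal.span {γ ^ (s - 1)} := hx
        simp only [h0, if_false, hx, hx', hJ, if_true, ne_eq, not_false_eq_true, and_self]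
        rw [sub_zero, eq_comm, one_add_div hq1]
        congr 1
        ring
      · have hx' : x ∉ Ideal.span {γ ^ (s - 1)} := hx
        simp [h0, hx, hx', hJ]
  set φ : C →ₗ[R] R := (LinearMap.proj i).comp C.subtype with hφ
  have hφapp : ∀ c : C, φ c = (c : Fin n → R) i := fun c => rfl
  set A : ℕ := (Finset.univ.filter (fun c : C => (c : Fin n → R) i = 0)).card with hA
  set B : ℕ := (Finset.univ.filter
      (fun c : C => (c : Fin n → R) i ∈ J ∧ (c : Fin n → R) i ≠ 0)).card with hB
  set NJ : ℕ := (Finset.univ.filter (fun c : C => (c : Fin n → R) i ∈ J)).card with hNJ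
  have hsplit : NJ = A + B := by
    have e1 : Finset.univ.filter (fun c : C => (c : Fin n → R) i ∈ J) =
        Finset.univ.filter (fun c : C => (c : Fin n → R) i = 0) ∪
        Finset.univ.filter (fun c : C => (c : Fin n → R) i ∈ J ∧ (c : Fin n → R) i ≠ 0) := by
      ext c
      simp only [Finset.mem_filter, Finset.mem_union, Finset.mem_univ, true_and]
      constructor
      · intro hc
        by_cases h0 : (c : Fin n → R) i = 0
        · exact Or.inl h0
        · exact Or.inr ⟨hc, h0⟩
      · rintro (h0 | ⟨hc, _⟩)
        · rw [h0]; exact J.zero_mem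
        · exact hc
    have hdisj : Disjoint
        (Finset.univ.filter (fun c : C => (c : Fin n → R) i = 0))
        (Finset.univ.filter (fun c : C => (c : Fin n → R) i ∈ J ∧ (c : Fin n → R) i ≠ 0)) := by
      rw [Finset.disjoint_left]
      intro c h1 h2
      simp only [Finset.mem_filter, Finset.mem_univ, true_and] at h1 h2
      exact h2.2 h1
    rw [hNJ, e1, Finset.card_union_of_disjoint hdisj, hA, hB]
  have hAker : A = Nat.card (LinearMap.ker φ) := by
    rw [hA, ← Fintype.card_subtype, Nat.card_eq_fintype_card]
    exact Fintype.card_congr (Equiv.subtypeEquivRight (fun c => by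
      rw [LinearMap.mem_ker, hφapp])).symm
  set H : Submodule R C := Submodule.comap φ J with hH
  have hNJH : NJ = Nat.card H := by
    rw [hNJ, ← Fintype.card_subtype, Nat.card_eq_fintype_card]
    exact Fintype.card_congr (Equiv.subtypeEquivRight (fun c => by
      rw [hH, Submodule.mem_comap, hφapp])).symm
  set ψ : H →ₗ[R] R := φ.comp H.subtype with hψ
  have hrange : LinearMap.range ψ = (J : Submodule R R) := by
    apply le_antisymm
    · rintro y ⟨x, rfl⟩
      exact x.2
    · intro y hy
      obtain ⟨c₀, hc₀C, hc₀⟩ := h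
      have hmem := unit_pow_decomp γ s hs hmax hnil hc₀
      obtain ⟨a, ha⟩ := Ideal.mem_span_singleton.mp hmem
      obtain ⟨r, hr⟩ := Ideal.mem_span_singleton.mp hy
      have hy' : y = (r * a) * (c₀ i) := by rw [hr, ha]; ring
      have hmemH : (r * a) • (⟨c₀, hc₀C⟩ : C) ∈ H := by
        rw [hH, Submodule.mem_comap, map_smul, hφapp]
        show (r * a) • (c₀ i) ∈ J
        rw [smul_eq_mul, ← hy']
        exact hy
      refine ⟨⟨(r * a) • (⟨c₀, hc₀C⟩ : C), hmemH⟩, ?_⟩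
      show φ ((r * a) • (⟨c₀, hc₀C⟩ : C)) = y
      rw [map_smul, hφapp]
      show (r * a) • (c₀ i) = y
      rw [smul_eq_mul, hy']
  have hkerle : LinearMap.ker φ ≤ H := by
    intro c hc
    rw [hH, Submodule.mem_comap]
    rw [LinearMap.mem_ker] at hc
    rw [hc]
    exact J.zero_mem
  have hkerψ : Nat.card (LinearMap.ker ψ) = Nat.card (LinearMap.ker φ) := by
    have h1 : LinearMap.ker ψ = Submodule.comap H.subtype (LinearMap.ker φ) := by
      rw [hψ, LinearMap.ker_comp]
    rw [h1]
    exact Nat.card_congr (Submodule.comapSubtypeEquivOfLe hkerle).toEquiv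
  have hcardH : Nat.card H = Nat.card (LinearMap.ker φ) * q := by
    rw [card_eq_ker_mul_range' ψ, hkerψ, hrange]
    congr 1
    rw [← hq, ← card_minimal_ideal γ s hs hmax hnil hnil']
  have hNJA : NJ = q * A := by
    rw [hNJH, hcardH, hAker]; ring
  have hsum : ∑ c : C, wtHom γ s q ((c : Fin n → R) i) =
      (Fintype.card C : ℚ) - A + B / ((q:ℚ) - 1) := by
    simp_rw [hwt]
    rw [Finset.sum_add_distrib, Finset.sum_sub_distrib, ← Finset.sum_div]
    congr 2
    · simp
    · rw [Finset.sum_boole, hA]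
    · rw [Finset.sum_boole, hB]
  rw [hsum]
  have hBA : (B : ℚ) = ((q : ℚ) - 1) * A := by
    have h1 : (NJ : ℚ) = A + B := by exact_mod_cast hsplit
    have h2 : (NJ : ℚ) = q * A := by exact_mod_cast hNJA
    rw [h2] at h1
    linarith
  rw [hBA, Nat.card_eq_fintype_card]
  field_simp
  ring

/-- Plotkin bound for the homogeneous weight: `d ≤ |C|/(|C|-1)·n`, with equality iff
the code is non-degenerate and of constant homogeneous weight `d`. -/
theorem homogeneous_plotkin_bound {R : Type*} [CommRing R] [IsLocalRing R] [Fintype R]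
    (γ : R) (s q : ℕ) (hs : 1 ≤ s)
    (hmax : IsLocalRing.maximalIdeal R = Ideal.span {γ})
    (hnil : γ ^ s = 0) (hnil' : γ ^ (s - 1) ≠ 0)
    (hq : Nat.card (R ⧸ IsLocalRing.maximalIdeal R) = q)
    {n : ℕ} (C : Submodule R (Fin n → R)) (hC : C ≠ ⊥) (d : ℚ)
    (hd : IsLeast {w : ℚ | ∃ c ∈ C, c ≠ 0 ∧ wtHomV γ s q c = w} d) :
    d ≤ (Nat.card C : ℚ) / ((Nat.card C : ℚ) - 1) * n ∧
      (d = (Nat.card C : ℚ) / ((Nat.card C : ℚ) - 1) * n ↔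
        ((∀ i : Fin n, ∃ c ∈ C, c i ≠ 0) ∧
          ∀ c ∈ C, c ≠ 0 → wtHomV γ s q c = d)) := by
  -- basic setup
  obtain ⟨x₀, hx₀C, hx₀⟩ := Submodule.ne_bot_iff C |>.mp hC
  set Nq : ℚ := (Nat.card C : ℚ) with hNq
  have hcard : Nat.card C = Fintype.card C := Nat.card_eq_fintype_card
  have hN2 : 2 ≤ Fintype.card C := by
    have : Nontrivial C := ⟨⟨0, ⟨x₀, hx₀C⟩, fun he => hx₀ (by
      have := congrArg (Subtype.val) he
      simpa using this.symm)⟩⟩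
    exact Fintype.one_lt_card_iff_nontrivial.mpr this
  have hNq2 : (2 : ℚ) ≤ Nq := by
    rw [hNq, hcard]; exact_mod_cast hN2
  have hNq1 : (0 : ℚ) < Nq - 1 := by linarith
  -- the total sum
  set T : ℚ := ∑ c : C, wtHomV γ s q (c : Fin n → R) with hT
  set S : Fin n → ℚ := fun i => ∑ c : C, wtHom γ s q ((c : Fin n → R) i) with hS
  have hTsum : T = ∑ i, S i := by
    rw [hT, hS]
    unfold wtHomV
    rw [Finset.sum_comm]
  have hSdich : ∀ i, (∃ c ∈ C, c i ≠ 0) → S i = Nq := by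
    intro i hex
    rw [hS, hNq]
    exact coord_sum γ s q hs hmax hnil hnil' hq C i hex
  have hSzero : ∀ i, ¬(∃ c ∈ C, c i ≠ 0) → S i = 0 := by
    intro i hex
    push_neg at hex
    rw [hS]
    apply Finset.sum_eq_zero
    intro c _
    rw [hex c.1 c.2]
    simp [wtHom]
  have hSle : ∀ i, S i ≤ Nq := by
    intro i
    by_cases hex : ∃ c ∈ C, c i ≠ 0
    · rw [hSdich i hex]
    · rw [hSzero i hex]; linarith
  have hTupper : T ≤ n * Nq := by
    rw [hTsum]
    calc ∑ i, S i ≤ ∑ _i : Fin n, Nq := Finset.sum_le_sum (fun i _ => hSle i)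
    _ = n * Nq := by rw [Finset.sum_const, Finset.card_univ, Fintype.card_fin, nsmul_eq_mul]
  -- the lower bound via nonzero codewords
  have hwt0 : wtHomV γ s q ((0 : C) : Fin n → R) = 0 := by
    unfold wtHomV
    apply Finset.sum_eq_zero
    intro i _
    simp [wtHom]
  have hTerase : T = ∑ c ∈ Finset.univ.erase (0 : C), wtHomV γ s q (c : Fin n → R) := by
    rw [hT]
    exact (Finset.sum_erase (f := fun c : C => wtHomV γ s q (c : Fin n → R))
      Finset.univ (a := (0 : C)) hwt0).symm
  have hcarderase : (Finset.univ.erase (0 : C)).card = Fintype.card C - 1 := by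
    rw [Finset.card_erase_of_mem (Finset.mem_univ 0), Finset.card_univ]
  have hdle : ∀ c : C, c ≠ 0 → d ≤ wtHomV γ s q (c : Fin n → R) := by
    intro c hc
    apply hd.2
    exact ⟨c.1, c.2, by simpa [Submodule.coe_eq_zero] using hc, rfl⟩
  have hcaste : ((Fintype.card C - 1 : ℕ) : ℚ) = Nq - 1 := by
    rw [Nat.cast_sub (by omega), Nat.cast_one, hNq, hcard]
  have hTlower : d * (Nq - 1) ≤ T := by
    rw [hTerase]
    calc d * (Nq - 1) = ∑ _c ∈ Finset.univ.erase (0 : C), d := by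
          rw [Finset.sum_const, hcarderase, nsmul_eq_mul, hcaste]; ring
    _ ≤ _ := Finset.sum_le_sum (fun c hc => hdle c (Finset.ne_of_mem_erase hc))
  have hmain : d ≤ Nq / (Nq - 1) * n := by
    rw [div_mul_eq_mul_div, le_div_iff₀ hNq1]
    calc d * (Nq - 1) ≤ T := hTlower
    _ ≤ n * Nq := hTupper
    _ = Nq * n := by ring
  refine ⟨hmain, ?_, ?_⟩
  · -- equality → nondegenerate ∧ constant weight
    intro heq
    have heq' : d * (Nq - 1) = Nq * n := by
      rw [heq, div_mul_eq_mul_div, div_mul_eq_mul_div]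
      field_simp
    have hTeq : T = n * Nq := by
      apply le_antisymm hTupper
      calc (n : ℚ) * Nq = d * (Nq - 1) := by rw [heq']; ring
      _ ≤ T := hTlower
    constructor
    · intro i
      by_contra hex
      have hzero : S i = 0 := hSzero i hex
      have : T < n * Nq := by
        rw [hTsum]
        calc ∑ j, S j < ∑ _j : Fin n, Nq := by
              apply Finset.sum_lt_sum (fun j _ => hSle j)
              exact ⟨i, Finset.mem_univ i, by rw [hzero]; linarith⟩
        _ = n * Nq := by rw [Finset.sum_const, Finset.card_univ, Fintype.card_fin, nsmul_eq_mul]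
      linarith [hTeq ▸ this]
    · intro c hcC hc0
      have hTeq2 : T = d * (Nq - 1) := by rw [hTeq, heq']; ring
      by_contra hne
      have hlt : d < wtHomV γ s q c := by
        rcases lt_or_eq_of_le (hdle ⟨c, hcC⟩ (by simpa [Submodule.coe_eq_zero] using hc0)) with h | h
        · exact h
        · exact absurd h.symm hne
      have hmem : (⟨c, hcC⟩ : C) ∈ Finset.univ.erase (0 : C) := by
        apply Finset.mem_erase_of_ne_of_mem _ (Finset.mem_univ _)
        simpa [Submodule.coe_eq_zero] using hc0
      have : d * (Nq - 1) < T := by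
        rw [hTerase]
        calc d * (Nq - 1) = ∑ _c ∈ Finset.univ.erase (0 : C), d := by
              rw [Finset.sum_const, hcarderase, nsmul_eq_mul, hcaste]; ring
        _ < _ := by
              apply Finset.sum_lt_sum (fun x hx => hdle x (Finset.ne_of_mem_erase hx))
              exact ⟨⟨c, hcC⟩, hmem, hlt⟩
      linarith [hTeq2 ▸ this]
  · -- nondegenerate ∧ constant weight → equality
    rintro ⟨hnd, hconst⟩
    have hTeq : T = n * Nq := by
      rw [hTsum]
      calc ∑ i, S i = ∑ _i : Fin n, Nq := Finset.sum_congr rfl (fun i _ => hSdich i (hnd i))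
      _ = n * Nq := by rw [Finset.sum_const, Finset.card_univ, Fintype.card_fin, nsmul_eq_mul]
    have hTeq2 : T = d * (Nq - 1) := by
      rw [hTerase]
      calc ∑ c ∈ Finset.univ.erase (0 : C), wtHomV γ s q (c : Fin n → R)
          = ∑ _c ∈ Finset.univ.erase (0 : C), d := by
            apply Finset.sum_congr rfl
            intro c hc
            exact hconst c.1 c.2 (by
              simpa [Submodule.coe_eq_zero] using Finset.ne_of_mem_erase hc)
      _ = d * (Nq - 1) := by
            rw [Finset.sum_const, hcarderase, nsmul_eq_mul, hcaste]; ring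
    have : d * (Nq - 1) = Nq * n := by rw [← hTeq2, hTeq]; ring
    rw [div_mul_eq_mul_div, eq_div_iff (by linarith)]
    linarith [this]
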